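/- Let (Ω, 𝓕, P) be a probability space, q ∈ [0,1), α ∈ (q−1, 0], K ≥ 0, and let I₁ : (0,∞) → ℝ be measurable with |I₁(z) − z^{q−1}| ≤ K·(1 + z^α) for all z > 0. Let (H_T)_{T>0} be random variables with H_T > 0 P-a.s., E[H_T] < ∞, E[H_T^q] < ∞, E[H_T^{1+α}] < ∞ for every T, and sup_{T>0} E[H_T] < ∞; let x ∈ ℝ and λ₁(T), λ₂(T) > 0 satisfy E[H_T·I₁(λ₁(T)H_T)] = λ₂(T)^{q−1}·E[H_T^q] = x for every T > 0. Then there exists M ∈ ℝ with M ≤ x, independent of T, such that for every T > 0: E[H_T·|I₁(λ₁(T)H_T) − (λ₂(T)H_T)^{q−1}|] ≤ 2K·(E[H_T] + (x − M)^{α/(q−1)}·E[H_T]^{1−α/(q−1)}). -/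

import Mathlib

open MeasureTheory

private lemma integral_pos_of_ae_pos {Ω : Type*} [MeasurableSpace Ω] {P : Measure Ω}
    [IsProbabilityMeasure P] {f : Ω → ℝ} (hf : Integrable f P)
    (hpos : ∀ᵐ ω ∂P, 0 < f ω) : 0 < ∫ ω, f ω ∂P := by
  refine (integral_pos_iff_support_of_nonneg_ae (hpos.mono fun ω h => h.le) hf).2 ?_
  have h1 : P (Function.support f)ᶜ = 0 := by
    refine measure_mono_null ?_ (ae_iff.1 hpos)
    intro ω hω
    simp only [Set.mem_compl_iff, Function.mem_support, not_not] at hω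
    simp [hω]
  have h2 : (1 : ENNReal) ≤ P (Function.support f) + P (Function.support f)ᶜ := by
    calc (1 : ENNReal) = P (Function.support f ∪ (Function.support f)ᶜ) := by
          rw [Set.union_compl_self, measure_univ]
      _ ≤ _ := measure_union_le _ _
  rw [h1, add_zero] at h2
  exact lt_of_lt_of_le (by norm_num) h2

private lemma integral_abs_eq_two_mul {Ω : Type*} [MeasurableSpace Ω] {P : Measure Ω}
    {f : Ω → ℝ} (hf : Integrable f P) (h0 : ∫ ω, f ω ∂P = 0) :
    (∫ ω, |f ω| ∂P) = 2 * ∫ ω, max (f ω) 0 ∂P ∧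
      (∫ ω, |f ω| ∂P) = 2 * ∫ ω, max (-f ω) 0 ∂P := by
  have habs : ∀ a : ℝ, |a| = max a 0 + max (-a) 0 := by
    intro a
    rcases le_total 0 a with h | h
    · rw [abs_of_nonneg h, max_eq_left h, max_eq_right (by linarith : -a ≤ 0)]; ring
    · rw [abs_of_nonpos h, max_eq_right h, max_eq_left (by linarith : 0 ≤ -a)]; ring
  have hsub : ∀ a : ℝ, a = max a 0 - max (-a) 0 := by
    intro a
    rcases le_total 0 a with h | h
    · rw [max_eq_left h, max_eq_right (by linarith : -a ≤ 0)]; ring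
    · rw [max_eq_right h, max_eq_left (by linarith : 0 ≤ -a)]; ring
  have h1 : (∫ ω, |f ω| ∂P) = (∫ ω, max (f ω) 0 ∂P) + ∫ ω, max (-f ω) 0 ∂P := by
    rw [← integral_add hf.pos_part hf.neg_part]
    exact integral_congr_ae (Filter.Eventually.of_forall fun ω => habs (f ω))
  have h2 : (∫ ω, (max (f ω) 0 - max (-f ω) 0) ∂P) = 0 := by
    rw [integral_congr_ae (Filter.Eventually.of_forall fun ω => (hsub (f ω)).symm)]
    exact h0
  rw [integral_sub hf.pos_part hf.neg_part] at h2
  constructor <;> linarith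

private lemma lyapunov_aux {Ω : Type*} [MeasurableSpace Ω] (P : Measure Ω) {h : Ω → ℝ}
    (hm : Measurable h) (hpos : ∀ᵐ ω ∂P, 0 < h ω) {r θ : ℝ} (hθ0 : 0 < θ) (hθ1 : θ < 1)
    (hIq : Integrable (fun ω => h ω ^ r) P) (hI1 : Integrable h P) :
    ∫ ω, h ω ^ (θ * r + (1 - θ)) ∂P ≤
      (∫ ω, h ω ^ r ∂P) ^ θ * (∫ ω, h ω ∂P) ^ (1 - θ) := by
  have h1θ : 0 < 1 - θ := by linarith
  have hpq : Real.HolderConjugate (1 / θ) (1 / (1 - θ)) := by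
    rw [Real.holderConjugate_iff]; constructor
    · exact one_lt_one_div hθ0 hθ1
    · rw [one_div, one_div, inv_inv, inv_inv]; ring
  -- Memℒp facts
  have hF : MemLp (fun ω => h ω ^ (θ * r)) (ENNReal.ofReal (1 / θ)) P := by
    have base : MemLp (fun ω => h ω ^ r) 1 P := memLp_one_iff_integrable.2 hIq
    have hq0 : ENNReal.ofReal θ ≠ 0 := by
      simp only [ne_eq, ENNReal.ofReal_eq_zero, not_le]
      linarith
    have := (memLp_norm_rpow_iff base.aestronglyMeasurable hq0 ENNReal.ofReal_ne_top).2 base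
    rw [ENNReal.toReal_ofReal hθ0.le] at this
    have hexp : 1 / ENNReal.ofReal θ = ENNReal.ofReal (1 / θ) := by
      rw [one_div, one_div, ← ENNReal.ofReal_inv_of_pos hθ0]
    rw [hexp] at this
    refine this.ae_eq ?_
    filter_upwards [hpos] with ω hω
    rw [Real.norm_eq_abs, abs_of_pos (Real.rpow_pos_of_pos hω r), ← Real.rpow_mul hω.le,
      mul_comm r θ]
  have hG : MemLp (fun ω => h ω ^ (1 - θ)) (ENNReal.ofReal (1 / (1 - θ))) P := by
    have base : MemLp h 1 P := memLp_one_iff_integrable.2 hI1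
    have hq0 : ENNReal.ofReal (1 - θ) ≠ 0 := by
      simp only [ne_eq, ENNReal.ofReal_eq_zero, not_le]
      linarith
    have := (memLp_norm_rpow_iff base.aestronglyMeasurable hq0 ENNReal.ofReal_ne_top).2 base
    rw [ENNReal.toReal_ofReal h1θ.le] at this
    have hexp : 1 / ENNReal.ofReal (1 - θ) = ENNReal.ofReal (1 / (1 - θ)) := by
      rw [one_div, one_div, ← ENNReal.ofReal_inv_of_pos h1θ]
    rw [hexp] at this
    refine this.ae_eq ?_
    filter_upwards [hpos] with ω hω
    rw [Real.norm_eq_abs, abs_of_pos hω]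
  have hFnn : 0 ≤ᵐ[P] fun ω => h ω ^ (θ * r) := by
    filter_upwards [hpos] with ω hω
    exact (Real.rpow_pos_of_pos hω _).le
  have hGnn : 0 ≤ᵐ[P] fun ω => h ω ^ (1 - θ) := by
    filter_upwards [hpos] with ω hω
    exact (Real.rpow_pos_of_pos hω _).le
  have key := integral_mul_le_Lp_mul_Lq_of_nonneg hpq hFnn hGnn hF hG
  have e1 : (∫ ω, h ω ^ (θ * r) * h ω ^ (1 - θ) ∂P) = ∫ ω, h ω ^ (θ * r + (1 - θ)) ∂P := by
    refine integral_congr_ae ?_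
    filter_upwards [hpos] with ω hω
    rw [Real.rpow_add hω]
  have e2 : (∫ ω, (h ω ^ (θ * r)) ^ (1 / θ) ∂P) = ∫ ω, h ω ^ r ∂P := by
    refine integral_congr_ae ?_
    filter_upwards [hpos] with ω hω
    rw [← Real.rpow_mul hω.le]
    congr 1
    field_simp
  have e3 : (∫ ω, (h ω ^ (1 - θ)) ^ (1 / (1 - θ)) ∂P) = ∫ ω, h ω ∂P := by
    refine integral_congr_ae ?_
    filter_upwards [hpos] with ω hω
    rw [← Real.rpow_mul hω.le]
    rw [mul_one_div, div_self (ne_of_gt h1θ), Real.rpow_one]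
  rw [e1, e2, e3, one_div_one_div, one_div_one_div] at key
  exact key

/-- Core per-horizon estimates, not involving the choice of `M`. -/
private lemma core_bound {Ω : Type*} [MeasurableSpace Ω] (P : Measure Ω)
    [IsProbabilityMeasure P] (q α K : ℝ) (hK : 0 ≤ K)
    (I₁ : ℝ → ℝ) (hI₁meas : Measurable I₁)
    (hI₁ : ∀ z : ℝ, 0 < z → |I₁ z - z ^ (q - 1)| ≤ K * (1 + z ^ α))
    {h : Ω → ℝ} {l1 l2 : ℝ} (hm : Measurable h) (hpos : ∀ᵐ ω ∂P, 0 < h ω)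
    (i1 : Integrable h P) (iq : Integrable (fun ω => h ω ^ q) P)
    (ia : Integrable (fun ω => h ω ^ (1 + α)) P)
    (hl1 : 0 < l1) (hl2 : 0 < l2)
    (hb1 : (∫ ω, h ω * I₁ (l1 * h ω) ∂P) = l2 ^ (q - 1) * ∫ ω, h ω ^ q ∂P) :
    (∫ ω, h ω * |I₁ (l1 * h ω) - (l2 * h ω) ^ (q - 1)| ∂P) ≤
        2 * K * ((∫ ω, h ω ∂P) + l1 ^ α * ∫ ω, h ω ^ (1 + α) ∂P) ∧
      l1 ^ (q - 1) * (∫ ω, h ω ^ q ∂P) ≤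
        l2 ^ (q - 1) * (∫ ω, h ω ^ q ∂P) +
          K * ((∫ ω, h ω ∂P) + l1 ^ α * ∫ ω, h ω ^ (1 + α) ∂P) := by
  -- pointwise algebraic identities
  have hptA1 : ∀ ω, 0 < h ω → h ω * (l1 * h ω) ^ (q - 1) = l1 ^ (q - 1) * h ω ^ q := by
    intro ω hω
    rw [Real.mul_rpow hl1.le hω.le]
    have hq : h ω ^ q = h ω ^ (1 + (q - 1)) := by norm_num
    rw [hq, Real.rpow_add hω 1 (q - 1), Real.rpow_one]; ring
  have hptA2 : ∀ ω, 0 < h ω → h ω * (l2 * h ω) ^ (q - 1) = l2 ^ (q - 1) * h ω ^ q := by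
    intro ω hω
    rw [Real.mul_rpow hl2.le hω.le]
    have hq : h ω ^ q = h ω ^ (1 + (q - 1)) := by norm_num
    rw [hq, Real.rpow_add hω 1 (q - 1), Real.rpow_one]; ring
  have hptB : ∀ ω, 0 < h ω →
      h ω * (K * (1 + (l1 * h ω) ^ α)) = K * (h ω + l1 ^ α * h ω ^ (1 + α)) := by
    intro ω hω
    rw [Real.mul_rpow hl1.le hω.le, Real.rpow_add hω 1 α, Real.rpow_one]; ring
  -- integrability
  have ig : Integrable (fun ω => K * (h ω + l1 ^ α * h ω ^ (1 + α))) P :=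
    (i1.add (ia.const_mul _)).const_mul K
  have iφ1 : Integrable (fun ω => h ω * (l1 * h ω) ^ (q - 1)) P := by
    refine (iq.const_mul (l1 ^ (q - 1))).congr ?_
    filter_upwards [hpos] with ω hω
    exact (hptA1 ω hω).symm
  have iφ2 : Integrable (fun ω => h ω * (l2 * h ω) ^ (q - 1)) P := by
    refine (iq.const_mul (l2 ^ (q - 1))).congr ?_
    filter_upwards [hpos] with ω hω
    exact (hptA2 ω hω).symm
  have hudm : AEStronglyMeasurable
      (fun ω => h ω * I₁ (l1 * h ω) - h ω * (l1 * h ω) ^ (q - 1)) P := by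
    refine Measurable.aestronglyMeasurable ?_
    exact ((hm.mul (hI₁meas.comp (measurable_const.mul hm))).sub
      (hm.mul ((measurable_const.mul hm).pow measurable_const)))
  have hud_bound : ∀ᵐ ω ∂P, ‖h ω * I₁ (l1 * h ω) - h ω * (l1 * h ω) ^ (q - 1)‖ ≤
      K * (h ω + l1 ^ α * h ω ^ (1 + α)) := by
    filter_upwards [hpos] with ω hω
    have hz : 0 < l1 * h ω := mul_pos hl1 hω
    rw [Real.norm_eq_abs, ← mul_sub, abs_mul, abs_of_pos hω, ← hptB ω hω]
    exact mul_le_mul_of_nonneg_left (hI₁ _ hz) hω.le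
  have iud : Integrable (fun ω => h ω * I₁ (l1 * h ω) - h ω * (l1 * h ω) ^ (q - 1)) P :=
    Integrable.mono' ig hudm hud_bound
  have iu : Integrable (fun ω => h ω * I₁ (l1 * h ω)) P := by
    refine (iud.add iφ1).congr (Filter.Eventually.of_forall fun ω => by
      simp only [Pi.add_apply]; ring)
  have if2 : Integrable (fun ω => h ω * (I₁ (l1 * h ω) - (l2 * h ω) ^ (q - 1))) P := by
    refine (iu.sub iφ2).congr (Filter.Eventually.of_forall fun ω => by
      simp only [Pi.sub_apply]; ring)
  -- basic integral computations
  have hint_φ2 : (∫ ω, h ω * (l2 * h ω) ^ (q - 1) ∂P) = l2 ^ (q - 1) * ∫ ω, h ω ^ q ∂P := by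
    rw [show (l2 ^ (q - 1) * ∫ ω, h ω ^ q ∂P) = ∫ ω, l2 ^ (q - 1) * h ω ^ q ∂P from
      (integral_const_mul _ _).symm]
    refine integral_congr_ae ?_
    filter_upwards [hpos] with ω hω
    exact hptA2 ω hω
  have hint_φ1 : (∫ ω, h ω * (l1 * h ω) ^ (q - 1) ∂P) = l1 ^ (q - 1) * ∫ ω, h ω ^ q ∂P := by
    rw [show (l1 ^ (q - 1) * ∫ ω, h ω ^ q ∂P) = ∫ ω, l1 ^ (q - 1) * h ω ^ q ∂P from
      (integral_const_mul _ _).symm]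
    refine integral_congr_ae ?_
    filter_upwards [hpos] with ω hω
    exact hptA1 ω hω
  have hint_g : (∫ ω, K * (h ω + l1 ^ α * h ω ^ (1 + α)) ∂P) =
      K * ((∫ ω, h ω ∂P) + l1 ^ α * ∫ ω, h ω ^ (1 + α) ∂P) := by
    rw [integral_const_mul, integral_add i1 (ia.const_mul _), integral_const_mul]
  have hintf0 : (∫ ω, h ω * (I₁ (l1 * h ω) - (l2 * h ω) ^ (q - 1)) ∂P) = 0 := by
    have e : (∫ ω, h ω * (I₁ (l1 * h ω) - (l2 * h ω) ^ (q - 1)) ∂P) =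
        ∫ ω, (h ω * I₁ (l1 * h ω) - h ω * (l2 * h ω) ^ (q - 1)) ∂P :=
      integral_congr_ae (Filter.Eventually.of_forall fun ω => by ring)
    rw [e, integral_sub iu iφ2, hint_φ2, hb1, sub_self]
  constructor
  · -- first bound
    obtain ⟨e1, e2⟩ := integral_abs_eq_two_mul if2 hintf0
    have lhs_eq : (∫ ω, h ω * |I₁ (l1 * h ω) - (l2 * h ω) ^ (q - 1)| ∂P) =
        ∫ ω, |h ω * (I₁ (l1 * h ω) - (l2 * h ω) ^ (q - 1))| ∂P := by
      refine integral_congr_ae ?_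
      filter_upwards [hpos] with ω hω
      rw [abs_mul, abs_of_pos hω]
    have hg0 : ∀ ω, 0 < h ω → 0 ≤ K * (h ω + l1 ^ α * h ω ^ (1 + α)) := by
      intro ω hω
      have := Real.rpow_pos_of_pos hω (1 + α)
      have := Real.rpow_pos_of_pos hl1 α
      positivity
    by_cases hc : l1 ^ (q - 1) ≤ l2 ^ (q - 1)
    · have hb : ∀ᵐ ω ∂P, max (h ω * (I₁ (l1 * h ω) - (l2 * h ω) ^ (q - 1))) 0 ≤
          K * (h ω + l1 ^ α * h ω ^ (1 + α)) := by
        filter_upwards [hpos] with ω hω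
        have hz : 0 < l1 * h ω := mul_pos hl1 hω
        have h1 : (l1 * h ω) ^ (q - 1) ≤ (l2 * h ω) ^ (q - 1) := by
          rw [Real.mul_rpow hl1.le hω.le, Real.mul_rpow hl2.le hω.le]
          exact mul_le_mul_of_nonneg_right hc (Real.rpow_pos_of_pos hω _).le
        have h2 : h ω * (I₁ (l1 * h ω) - (l2 * h ω) ^ (q - 1)) ≤
            K * (h ω + l1 ^ α * h ω ^ (1 + α)) := by
          calc h ω * (I₁ (l1 * h ω) - (l2 * h ω) ^ (q - 1)) ≤
              h ω * (I₁ (l1 * h ω) - (l1 * h ω) ^ (q - 1)) :=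
                mul_le_mul_of_nonneg_left (by linarith) hω.le
            _ ≤ h ω * (K * (1 + (l1 * h ω) ^ α)) :=
                mul_le_mul_of_nonneg_left (le_trans (le_abs_self _) (hI₁ _ hz)) hω.le
            _ = K * (h ω + l1 ^ α * h ω ^ (1 + α)) := hptB ω hω
        exact max_le h2 (hg0 ω hω)
      rw [lhs_eq, e1]
      have := integral_mono_ae if2.pos_part ig hb
      rw [hint_g] at this
      linarith
    · push_neg at hc
      have hb : ∀ᵐ ω ∂P, max (-(h ω * (I₁ (l1 * h ω) - (l2 * h ω) ^ (q - 1)))) 0 ≤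
          K * (h ω + l1 ^ α * h ω ^ (1 + α)) := by
        filter_upwards [hpos] with ω hω
        have hz : 0 < l1 * h ω := mul_pos hl1 hω
        have h1 : (l2 * h ω) ^ (q - 1) ≤ (l1 * h ω) ^ (q - 1) := by
          rw [Real.mul_rpow hl1.le hω.le, Real.mul_rpow hl2.le hω.le]
          exact mul_le_mul_of_nonneg_right hc.le (Real.rpow_pos_of_pos hω _).le
        have h2 : -(h ω * (I₁ (l1 * h ω) - (l2 * h ω) ^ (q - 1))) ≤
            K * (h ω + l1 ^ α * h ω ^ (1 + α)) := by
          have habs : (l1 * h ω) ^ (q - 1) - I₁ (l1 * h ω) ≤ K * (1 + (l1 * h ω) ^ α) := by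
            have := hI₁ _ hz
            have h3 : (l1 * h ω) ^ (q - 1) - I₁ (l1 * h ω) ≤
                |I₁ (l1 * h ω) - (l1 * h ω) ^ (q - 1)| := by
              rw [abs_sub_comm]; exact le_abs_self _
            linarith
          calc -(h ω * (I₁ (l1 * h ω) - (l2 * h ω) ^ (q - 1))) =
              h ω * ((l2 * h ω) ^ (q - 1) - I₁ (l1 * h ω)) := by ring
            _ ≤ h ω * ((l1 * h ω) ^ (q - 1) - I₁ (l1 * h ω)) :=
                mul_le_mul_of_nonneg_left (by linarith) hω.le
            _ ≤ h ω * (K * (1 + (l1 * h ω) ^ α)) :=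
                mul_le_mul_of_nonneg_left habs hω.le
            _ = K * (h ω + l1 ^ α * h ω ^ (1 + α)) := hptB ω hω
        exact max_le h2 (hg0 ω hω)
      rw [lhs_eq, e2]
      have := integral_mono_ae if2.neg.pos_part ig hb
      simp only [Pi.neg_apply] at this
      rw [hint_g] at this
      linarith
  · -- second bound
    have idiff : Integrable (fun ω => h ω * (l1 * h ω) ^ (q - 1) - h ω * I₁ (l1 * h ω)) P :=
      iud.neg.congr (Filter.Eventually.of_forall fun ω => by
        simp only [Pi.neg_apply]; ring)
    have hb : ∀ᵐ ω ∂P, h ω * (l1 * h ω) ^ (q - 1) - h ω * I₁ (l1 * h ω) ≤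
        K * (h ω + l1 ^ α * h ω ^ (1 + α)) := by
      filter_upwards [hud_bound] with ω hω
      rw [Real.norm_eq_abs] at hω
      have := neg_abs_le (h ω * I₁ (l1 * h ω) - h ω * (l1 * h ω) ^ (q - 1))
      linarith
    have hmono := integral_mono_ae idiff ig hb
    rw [hint_g] at hmono
    have hsplit : (∫ ω, (h ω * (l1 * h ω) ^ (q - 1) - h ω * I₁ (l1 * h ω)) ∂P) =
        l1 ^ (q - 1) * (∫ ω, h ω ^ q ∂P) - l2 ^ (q - 1) * ∫ ω, h ω ^ q ∂P := by
      rw [integral_sub iφ1 iu, hint_φ1, hb1]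
    rw [hsplit] at hmono
    linarith

/-- Theorem 2.10 (turnpike for optimal wealth processes): there exists `M ≤ x`,
independent of the horizon `T`, such that for all `T > 0`,
`E[H_T |I₁(λ₁(T)H_T) - (λ₂(T)H_T)^{q-1}|]
  ≤ 2K(E[H_T] + (x-M)^{α/(q-1)} E[H_T]^{1-α/(q-1)})`. -/
theorem turnpike_wealth_rate
    {Ω : Type*} [MeasurableSpace Ω] (P : Measure Ω) [IsProbabilityMeasure P]
    (q α : ℝ) (hq0 : 0 ≤ q) (hq1 : q < 1) (hα1 : q - 1 < α) (hα2 : α ≤ 0)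
    (K : ℝ) (hK : 0 ≤ K)
    (I₁ : ℝ → ℝ) (hI₁meas : Measurable I₁)
    (hI₁ : ∀ z : ℝ, 0 < z → |I₁ z - z ^ (q - 1)| ≤ K * (1 + z ^ α))
    (H : ℝ → Ω → ℝ) (lam₁ lam₂ : ℝ → ℝ) (x : ℝ)
    (hHmeas : ∀ T : ℝ, 0 < T → Measurable (H T))
    (hHpos : ∀ T : ℝ, 0 < T → ∀ᵐ ω ∂P, 0 < H T ω)
    (hInt1 : ∀ T : ℝ, 0 < T → Integrable (H T) P)
    (hIntq : ∀ T : ℝ, 0 < T → Integrable (fun ω => H T ω ^ q) P)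
    (hIntα : ∀ T : ℝ, 0 < T → Integrable (fun ω => H T ω ^ (1 + α)) P)
    (hsup : ∃ Csup : ℝ, ∀ T : ℝ, 0 < T → ∫ ω, H T ω ∂P ≤ Csup)
    (hlam₁ : ∀ T : ℝ, 0 < T → 0 < lam₁ T)
    (hlam₂ : ∀ T : ℝ, 0 < T → 0 < lam₂ T)
    (hbudget₁ : ∀ T : ℝ, 0 < T →
      (∫ ω, H T ω * I₁ (lam₁ T * H T ω) ∂P) = lam₂ T ^ (q - 1) * ∫ ω, H T ω ^ q ∂P)
    (hbudget₂ : ∀ T : ℝ, 0 < T → lam₂ T ^ (q - 1) * (∫ ω, H T ω ^ q ∂P) = x) :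
    ∃ M : ℝ, M ≤ x ∧ ∀ T : ℝ, 0 < T →
      (∫ ω, H T ω * |I₁ (lam₁ T * H T ω) - (lam₂ T * H T ω) ^ (q - 1)| ∂P) ≤
        2 * K * ((∫ ω, H T ω ∂P) +
          (x - M) ^ (α / (q - 1)) * (∫ ω, H T ω ∂P) ^ (1 - α / (q - 1))) := by
  obtain ⟨Csup, hCsup⟩ := hsup
  have hq1' : q - 1 < 0 := by linarith
  have hqne : q - 1 ≠ 0 := ne_of_lt hq1'
  set θ := α / (q - 1) with hθdef
  have hθq : θ * (q - 1) = α := div_mul_cancel₀ α hqne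
  have hθ0 : 0 ≤ θ := div_nonneg_of_nonpos hα2 hq1'.le
  have hθ1 : θ < 1 := by
    by_contra hcon
    push_neg at hcon
    have := mul_le_mul_of_nonpos_right hcon hq1'.le
    rw [hθq, one_mul] at this
    linarith
  have h1θ : 0 < 1 - θ := by linarith
  set C := max Csup 1 with hCdef
  have hC1 : (1 : ℝ) ≤ C := le_max_right _ _
  have hC0 : 0 < C := lt_of_lt_of_le one_pos hC1
  set B := max (max (2 * (x + K * C)) ((2 * K * C ^ (1 - θ)) ^ (1 / (1 - θ)))) 1 with hBdef
  have hB1 : (1 : ℝ) ≤ B := le_max_right _ _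
  refine ⟨x - B, by linarith, fun T hT => ?_⟩
  have hae := hHpos T hT
  have hm := hHmeas T hT
  have hl1 := hlam₁ T hT
  have hl2 := hlam₂ T hT
  obtain ⟨main1, main2⟩ := core_bound P q α K hK I₁ hI₁meas hI₁ hm hae
    (hInt1 T hT) (hIntq T hT) (hIntα T hT) hl1 hl2 (hbudget₁ T hT)
  have hEh : 0 < ∫ ω, H T ω ∂P := integral_pos_of_ae_pos (hInt1 T hT) hae
  have hEq : 0 < ∫ ω, H T ω ^ q ∂P :=
    integral_pos_of_ae_pos (hIntq T hT) (hae.mono fun ω h => Real.rpow_pos_of_pos h q)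
  have hEa : 0 < ∫ ω, H T ω ^ (1 + α) ∂P :=
    integral_pos_of_ae_pos (hIntα T hT) (hae.mono fun ω h => Real.rpow_pos_of_pos h (1 + α))
  -- interpolation
  have hinterp : (∫ ω, H T ω ^ (1 + α) ∂P) ≤
      (∫ ω, H T ω ^ q ∂P) ^ θ * (∫ ω, H T ω ∂P) ^ (1 - θ) := by
    rcases eq_or_lt_of_le hθ0 with h0 | h0
    · have hα0 : α = 0 := by rw [← hθq, ← h0, zero_mul]
      rw [← h0, hα0]
      simp [Real.rpow_one]
    · have hly := lyapunov_aux P hm hae h0 hθ1 (hIntq T hT) (hInt1 T hT)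
      have hexp : θ * q + (1 - θ) = 1 + α := by
        rw [← hθq]; ring
      rwa [hexp] at hly
  set A := lam₁ T ^ (q - 1) * ∫ ω, H T ω ^ q ∂P with hAdef
  have hA0 : 0 < A := mul_pos (Real.rpow_pos_of_pos hl1 _) hEq
  -- key chained bound
  have hl1α : (lam₁ T ^ (q - 1)) ^ θ = lam₁ T ^ α := by
    rw [← Real.rpow_mul hl1.le, mul_comm, hθq]
  have hchain : lam₁ T ^ α * (∫ ω, H T ω ^ (1 + α) ∂P) ≤
      A ^ θ * (∫ ω, H T ω ∂P) ^ (1 - θ) := by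
    have h1 : lam₁ T ^ α * (∫ ω, H T ω ^ (1 + α) ∂P) ≤
        (lam₁ T ^ (q - 1)) ^ θ * ((∫ ω, H T ω ^ q ∂P) ^ θ * (∫ ω, H T ω ∂P) ^ (1 - θ)) := by
      rw [hl1α]
      exact mul_le_mul_of_nonneg_left hinterp (Real.rpow_pos_of_pos hl1 α).le
    have h2 : (lam₁ T ^ (q - 1)) ^ θ * ((∫ ω, H T ω ^ q ∂P) ^ θ * (∫ ω, H T ω ∂P) ^ (1 - θ)) =
        A ^ θ * (∫ ω, H T ω ∂P) ^ (1 - θ) := by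
      rw [hAdef, Real.mul_rpow (Real.rpow_pos_of_pos hl1 _).le hEq.le]
      ring
    linarith [h1, h2.symm.le]
  -- A is bounded by B
  have hAx : A ≤ x + K * ((∫ ω, H T ω ∂P) + lam₁ T ^ α * ∫ ω, H T ω ^ (1 + α) ∂P) := by
    have := hbudget₂ T hT
    rw [hAdef]
    linarith [main2]
  have hEhC : (∫ ω, H T ω ∂P) ≤ C := le_trans (hCsup T hT) (le_max_left _ _)
  have hstep : A ≤ x + K * C + K * (A ^ θ * C ^ (1 - θ)) := by
    have hEC : (∫ ω, H T ω ∂P) ^ (1 - θ) ≤ C ^ (1 - θ) :=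
      Real.rpow_le_rpow hEh.le hEhC (by linarith)
    have h2 : K * (A ^ θ * (∫ ω, H T ω ∂P) ^ (1 - θ)) ≤ K * (A ^ θ * C ^ (1 - θ)) :=
      mul_le_mul_of_nonneg_left
        (mul_le_mul_of_nonneg_left hEC (Real.rpow_nonneg hA0.le θ)) hK
    have h3 : K * (lam₁ T ^ α * ∫ ω, H T ω ^ (1 + α) ∂P) ≤
        K * (A ^ θ * (∫ ω, H T ω ∂P) ^ (1 - θ)) :=
      mul_le_mul_of_nonneg_left hchain hK
    have h4 : K * (∫ ω, H T ω ∂P) ≤ K * C := mul_le_mul_of_nonneg_left hEhC hK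
    nlinarith [hAx]
  have hAB : A ≤ B := by
    by_contra hcon
    push_neg at hcon
    have hA1 : (1 : ℝ) < A := lt_of_le_of_lt hB1 hcon
    have hy0 : (0 : ℝ) ≤ 2 * K * C ^ (1 - θ) := by positivity
    have hyA : (2 * K * C ^ (1 - θ)) ^ (1 / (1 - θ)) < A :=
      lt_of_le_of_lt (le_trans (le_max_right _ _) (le_max_left _ _)) hcon
    have key : 2 * K * C ^ (1 - θ) < A ^ (1 - θ) := by
      have hh := Real.rpow_lt_rpow (Real.rpow_nonneg hy0 _) hyA h1θ
      rwa [← Real.rpow_mul hy0, one_div, inv_mul_cancel₀ (ne_of_gt h1θ),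
        Real.rpow_one] at hh
    have hAθ : 0 < A ^ θ := Real.rpow_pos_of_pos (lt_trans one_pos hA1) θ
    have h3 : (2 * K * C ^ (1 - θ)) * A ^ θ < A ^ (1 - θ) * A ^ θ :=
      mul_lt_mul_of_pos_right key hAθ
    have h4 : A ^ (1 - θ) * A ^ θ = A := by
      rw [← Real.rpow_add (lt_trans one_pos hA1)]
      norm_num
    rw [h4] at h3
    have h5 : 2 * (x + K * C) ≤ B := le_trans (le_max_left _ _) (le_max_left _ _)
    nlinarith [hstep, hcon, h3, h5]
  -- conclusion
  rw [sub_sub_cancel]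
  have hfinal : lam₁ T ^ α * (∫ ω, H T ω ^ (1 + α) ∂P) ≤
      B ^ θ * (∫ ω, H T ω ∂P) ^ (1 - θ) := by
    refine le_trans hchain ?_
    exact mul_le_mul_of_nonneg_right (Real.rpow_le_rpow hA0.le hAB hθ0)
      (Real.rpow_nonneg hEh.le _)
  have h2K : (0 : ℝ) ≤ 2 * K := by linarith
  calc (∫ ω, H T ω * |I₁ (lam₁ T * H T ω) - (lam₂ T * H T ω) ^ (q - 1)| ∂P) ≤
      2 * K * ((∫ ω, H T ω ∂P) + lam₁ T ^ α * ∫ ω, H T ω ^ (1 + α) ∂P) := main1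
    _ ≤ 2 * K * ((∫ ω, H T ω ∂P) + B ^ θ * (∫ ω, H T ω ∂P) ^ (1 - θ)) :=
      mul_le_mul_of_nonneg_left (by linarith) h2K
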